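/- Let I = {0, i₁, i₂} be a Moore exponent set for q and n, with σ_j : x ↦ x^{q^{i_j}}. Then Fix(σ₁) = 𝔽_q or Fix(σ₂) = 𝔽_q, i.e. gcd(i₁, n) = 1 or gcd(i₂, n) = 1. -/

import Mathlib

open Finset

lemma pow_pow_fix {F : Type*} [Monoid F] {x : F} {a : ℕ} (h : x ^ a = x) :
    ∀ t, x ^ a ^ t = x := by
  intro t
  induction t with
  | zero => simp
  | succ t ih => rw [pow_succ, pow_mul, ih, h]

lemma count_le {F : Type*} [Field F] [Fintype F] [DecidableEq F] {m : ℕ} (hm : 2 ≤ m) :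
    (Finset.univ.filter (fun x : F => x ^ m = x)).card ≤ m := by
  classical
  have hne : (Polynomial.X ^ m - Polynomial.X : Polynomial F) ≠ 0 :=
    FiniteField.X_pow_card_sub_X_ne_zero F hm
  have hsub : (Finset.univ.filter (fun x : F => x ^ m = x)) ⊆
      (Polynomial.X ^ m - Polynomial.X : Polynomial F).roots.toFinset := by
    intro x hx
    rw [Finset.mem_filter] at hx
    rw [Multiset.mem_toFinset, Polynomial.mem_roots hne]
    simp [Polynomial.IsRoot, sub_eq_zero, hx.2]
  calc (Finset.univ.filter (fun x : F => x ^ m = x)).card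
      ≤ (Polynomial.X ^ m - Polynomial.X : Polynomial F).roots.toFinset.card :=
        Finset.card_le_card hsub
    _ ≤ Multiset.card (Polynomial.X ^ m - Polynomial.X : Polynomial F).roots :=
        Multiset.toFinset_card_le _
    _ ≤ (Polynomial.X ^ m - Polynomial.X : Polynomial F).natDegree := Polynomial.card_roots' _
    _ = m := FiniteField.X_pow_card_sub_X_natDegree_eq F hm

lemma count_ge {F : Type*} [Field F] [Fintype F] [DecidableEq F] {m : ℕ} (hm : 2 ≤ m)
    (hdvd : m - 1 ∣ Fintype.card F - 1) :
    m ≤ (Finset.univ.filter (fun x : F => x ^ m = x)).card := by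
  classical
  set k := m - 1 with hk
  have hk1 : 1 ≤ k := by omega
  have hm1 : m = k + 1 := by omega
  obtain ⟨g, hg⟩ := IsCyclic.exists_generator (α := Fˣ)
  have horder : orderOf g = Fintype.card F - 1 := by
    rw [orderOf_eq_card_of_forall_mem_zpowers hg, Nat.card_eq_fintype_card, Fintype.card_units]
  have hkdvd : k ∣ orderOf g := horder ▸ hdvd
  have hone : (0:ℕ) < Fintype.card F - 1 := by
    have := Fintype.one_lt_card (α := F)
    omega
  have hord_ne : orderOf g ≠ 0 := by rw [horder]; omega
  set h : Fˣ := g ^ (orderOf g / k) with hh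
  have horderh : orderOf h = k := orderOf_pow_orderOf_div hord_ne hkdvd
  have hk_one : h ^ k = 1 := by rw [← horderh]; exact pow_orderOf_eq_one h
  set T : Finset F := insert (0:F) ((Finset.range k).image fun j => ((h:F)) ^ j) with hT
  have himcard : ((Finset.range k).image fun j => ((h:F)) ^ j).card = k := by
    rw [Finset.card_image_of_injOn, Finset.card_range]
    intro a ha b hb hab
    simp only [Finset.coe_range, Set.mem_Iio] at ha hb
    have hab' : h ^ a = h ^ b := Units.ext (by push_cast; exact hab)
    exact pow_injOn_Iio_orderOf (by rw [horderh]; exact ha) (by rw [horderh]; exact hb) hab'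
  have h0notin : (0:F) ∉ (Finset.range k).image fun j => ((h:F)) ^ j := by
    simp only [Finset.mem_image]
    rintro ⟨j, -, hj⟩
    exact pow_ne_zero j (Units.ne_zero h) hj
  have hcardT : T.card = m := by
    rw [hT, Finset.card_insert_of_notMem h0notin, himcard]; omega
  have hTsub : T ⊆ Finset.univ.filter (fun x : F => x ^ m = x) := by
    intro x hx
    rw [Finset.mem_filter]
    refine ⟨Finset.mem_univ x, ?_⟩
    rw [hT, Finset.mem_insert] at hx
    rcases hx with rfl | hx
    · exact zero_pow (by omega)
    · obtain ⟨j, -, rfl⟩ := Finset.mem_image.mp hx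
      have hu : (h ^ j) ^ m = h ^ j := by
        rw [hm1, pow_succ, ← pow_mul, mul_comm j k, pow_mul, hk_one, one_pow, one_mul]
      have := congrArg Units.val hu
      push_cast at this
      exact this
  calc m = T.card := hcardT.symm
    _ ≤ _ := Finset.card_le_card hTsub



/-- If `I = {0, i₁, i₂}` is a Moore exponent set for `q` and `n`, then `Fix(σ₁) = 𝔽_q` or
`Fix(σ₂) = 𝔽_q`, i.e. `gcd(i₁, n) = 1` or `gcd(i₂, n) = 1`. -/
theorem stmt_4 (q n i₁ i₂ : ℕ) (hq : IsPrimePow q)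
    (hi₁ : 0 < i₁) (hi₁n : i₁ < n) (hi₂ : 0 < i₂) (hi₂n : i₂ < n) (hne : i₁ ≠ i₂)
    (Fq F : Type*) [Field Fq] [Field F] [Algebra Fq F]
    [Fintype Fq] [Fintype F]
    (hcard_q : Fintype.card Fq = q) (hcard_F : Fintype.card F = q ^ n)
    (hMoore : ∀ A : Fin 3 → F,
      (Matrix.of fun r c => A r ^ q ^ (![0, i₁, i₂] c) : Matrix (Fin 3) (Fin 3) F).det = 0 ↔
        ¬ LinearIndependent Fq A) :
    Nat.gcd i₁ n = 1 ∨ Nat.gcd i₂ n = 1 := by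
  classical
  by_contra hcon
  push_neg at hcon
  obtain ⟨hg1, hg2⟩ := hcon
  have hq2 : 2 ≤ q := hq.two_le
  have hn0 : 0 < n := hi₁.trans hi₁n
  obtain ⟨p, s, hp, hs, hq_eq⟩ := hq
  have hpp : p.Prime := hp.nat_prime
  haveI : Fact p.Prime := ⟨hpp⟩
  have hchar : CharP F p := by
    obtain ⟨r, hr⟩ := CharP.exists F
    haveI := hr
    obtain ⟨mm, hrp, hcard⟩ := FiniteField.card F r
    have hpr : p = r := by
      have h1 : r ^ (mm : ℕ) = p ^ (s * n) := by
        rw [← hcard, hcard_F, ← hq_eq, ← pow_mul]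
      have hpdvd : p ∣ r ^ (mm : ℕ) := by
        rw [h1]; exact dvd_pow_self p (by positivity)
      exact (Nat.prime_dvd_prime_iff_eq hpp hrp).mp (hpp.dvd_of_dvd_pow hpdvd)
    rwa [hpr]
  haveI := hchar
  haveI : ExpChar F p := ExpChar.prime hpp
  set e : Fq →+* F := algebraMap Fq F with he
  have halg : ∀ (c : Fq) (m : ℕ), e c ^ q ^ m = e c := by
    intro c m
    rw [← map_pow]
    congr 1
    have := FiniteField.pow_card_pow (K := Fq) m c
    rwa [hcard_q] at this
  have hqpow : ∀ m : ℕ, q ^ m = p ^ (s * m) := by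
    intro m; rw [← hq_eq, ← pow_mul]
  have hψdef : ∀ (m : ℕ) (x : F), iterateFrobenius F p (s * m) x = x ^ q ^ m := by
    intro m x; rw [iterateFrobenius_def, ← hqpow]
  have hadd : ∀ (m : ℕ) (x y : F), (x + y) ^ q ^ m = x ^ q ^ m + y ^ q ^ m := by
    intro m x y
    have h1 := map_add (iterateFrobenius F p (s * m)) x y
    rwa [hψdef, hψdef, hψdef] at h1
  have hdvdsub : ∀ d : ℕ, d ∣ n → q ^ d - 1 ∣ Fintype.card F - 1 := by
    intro d hd
    obtain ⟨t, rfl⟩ := hd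
    rw [hcard_F, pow_mul]
    simpa using Nat.sub_dvd_pow_sub_pow (q ^ d) 1 t
  -- the main claim for the cases gcd ≥ 3
  have claim : ∀ j : ℕ, 3 ≤ Nat.gcd j n →
      ∃ A : Fin 3 → F, LinearIndependent Fq A ∧ ∀ r, A r ^ q ^ j = A r := by
    intro j hg3
    set g := Nat.gcd j n with hgdef
    have hgj : g ∣ j := Nat.gcd_dvd_left _ _
    have hgn : g ∣ n := Nat.gcd_dvd_right _ _
    have hQ2 : 2 ≤ q ^ g := le_trans hq2 (Nat.le_self_pow (by omega) q)
    set S : Submodule Fq F :=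
      { carrier := {x : F | x ^ q ^ g = x}
        add_mem' := by
          intro a b ha hb
          simp only [Set.mem_setOf_eq] at *
          rw [hadd, ha, hb]
        zero_mem' := by
          simp only [Set.mem_setOf_eq]
          exact zero_pow (by positivity)
        smul_mem' := by
          intro c x hx
          simp only [Set.mem_setOf_eq] at *
          rw [Algebra.smul_def, mul_pow, hx, halg] } with hS
    have hmem : ∀ x : F, x ∈ S ↔ x ^ q ^ g = x := fun x => Iff.rfl
    haveI : Fintype S := Fintype.ofFinite _
    have hcardS : Fintype.card S =
        (Finset.univ.filter (fun x : F => x ^ q ^ g = x)).card := by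
      rw [Fintype.card_congr (Equiv.subtypeEquivRight hmem), Fintype.card_subtype]
    have hgeS : q ^ g ≤ Fintype.card S := by
      rw [hcardS]
      exact count_ge hQ2 (hdvdsub g hgn)
    have hrank : 3 ≤ Module.finrank Fq S := by
      have hc : Fintype.card S = q ^ Module.finrank Fq S := by
        have := Module.card_eq_pow_finrank (K := Fq) (V := S)
        rwa [hcard_q] at this
      rw [hc] at hgeS
      have := (Nat.pow_le_pow_iff_right (by omega : 1 < q)).mp hgeS
      omega
    haveI : Module.Finite Fq S := Module.Finite.of_finite
    set b := Module.finBasis Fq S with hb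
    set A : Fin 3 → F := fun r => ((b (Fin.castLE hrank r) : S) : F) with hA
    refine ⟨A, ?_, ?_⟩
    · have h1 := (b.linearIndependent.comp (Fin.castLE hrank)
        (Fin.castLE_injective hrank)).map' S.subtype S.ker_subtype
      exact h1
    · intro r
      obtain ⟨t, ht⟩ := hgj
      have hfixg : A r ^ q ^ g = A r := (hmem _).mp (b (Fin.castLE hrank r)).2
      rw [ht, pow_mul]
      exact pow_pow_fix hfixg t
  have contra : ∀ A : Fin 3 → F, LinearIndependent Fq A →
      (Matrix.of fun r c => A r ^ q ^ (![0, i₁, i₂] c) : Matrix (Fin 3) (Fin 3) F).det = 0 →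
      False := fun A hA hdet => (hMoore A).mp hdet hA
  have hcases : 3 ≤ Nat.gcd i₁ n ∨ 3 ≤ Nat.gcd i₂ n ∨
      (Nat.gcd i₁ n = 2 ∧ Nat.gcd i₂ n = 2) := by
    have p1 : 0 < Nat.gcd i₁ n := Nat.gcd_pos_of_pos_right _ hn0
    have p2 : 0 < Nat.gcd i₂ n := Nat.gcd_pos_of_pos_right _ hn0
    omega
  rcases hcases with h3 | h3 | hc
  · obtain ⟨A, hA, hfix⟩ := claim i₁ h3
    refine contra A hA ?_
    rw [← Matrix.exists_mulVec_eq_zero_iff]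
    refine ⟨![1, -1, 0], fun h0 => by simpa using congr_fun h0 0, ?_⟩
    funext r
    simp [Matrix.mulVec, dotProduct, Fin.sum_univ_three, hfix r]
  · obtain ⟨A, hA, hfix⟩ := claim i₂ h3
    refine contra A hA ?_
    rw [← Matrix.exists_mulVec_eq_zero_iff]
    refine ⟨![1, 0, -1], fun h0 => by simpa using congr_fun h0 0, ?_⟩
    funext r
    simp [Matrix.mulVec, dotProduct, Fin.sum_univ_three, hfix r]
  · obtain ⟨hc1, hc2⟩ := hc
    have h2i₁ : 2 ∣ i₁ := hc1 ▸ Nat.gcd_dvd_left i₁ n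
    have h2i₂ : 2 ∣ i₂ := hc2 ▸ Nat.gcd_dvd_left i₂ n
    have h2n : 2 ∣ n := hc1 ▸ Nat.gcd_dvd_right i₁ n
    -- find lam : fixed by q^2 but not in the image of Fq
    have hq22 : 2 ≤ q ^ 2 := le_trans hq2 (Nat.le_self_pow (by omega) q)
    have hcount := count_ge (F := F) hq22 (hdvdsub 2 h2n)
    have hnotsub : ¬ (Finset.univ.filter (fun x : F => x ^ q ^ 2 = x)) ⊆
        Finset.univ.image e := by
      intro hsub
      have h1 := Finset.card_le_card hsub
      have h2 : (Finset.univ.image e).card ≤ q := by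
        refine le_trans Finset.card_image_le ?_
        rw [Finset.card_univ, hcard_q]
      have h3 : q < q ^ 2 := by nlinarith
      omega
    obtain ⟨lam, hlam_mem, hlam_not⟩ := Finset.not_subset.mp hnotsub
    rw [Finset.mem_filter] at hlam_mem
    have hlamfix2 : lam ^ q ^ 2 = lam := hlam_mem.2
    have hlam_notrange : ∀ c : Fq, e c ≠ lam := fun c hc' =>
      hlam_not (Finset.mem_image.mpr ⟨c, Finset.mem_univ c, hc'⟩)
    have hlamfix : ∀ m : ℕ, 2 ∣ m → lam ^ q ^ m = lam := by
      rintro m ⟨t, rfl⟩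
      rw [pow_mul]
      exact pow_pow_fix hlamfix2 t
    -- find v not fixed by q^(i₁)
    have hvex : ∃ v : F, v ^ q ^ i₁ ≠ v := by
      by_contra hall
      push_neg at hall
      have hfeq : (Finset.univ.filter (fun x : F => x ^ q ^ i₁ = x)) = Finset.univ := by
        refine Finset.eq_univ_of_forall fun x => Finset.mem_filter.mpr ⟨Finset.mem_univ x, hall x⟩
      have h1 := count_le (F := F) (m := q ^ i₁)
        (le_trans hq2 (Nat.le_self_pow (by omega) q))
      rw [hfeq, Finset.card_univ, hcard_F] at h1
      exact absurd h1 (not_le.mpr (Nat.pow_lt_pow_right (by omega) hi₁n))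
    obtain ⟨v, hv⟩ := hvex
    -- linear independence of ![1, v, lam]
    set ψ : F →+* F := iterateFrobenius F p (s * i₁) with hψs
    have hψ : ∀ x : F, ψ x = x ^ q ^ i₁ := hψdef i₁
    have hψe : ∀ c : Fq, ψ (e c) = e c := fun c => by rw [hψ, halg]
    have hψlam : ψ lam = lam := by rw [hψ, hlamfix i₁ h2i₁]
    have hind : LinearIndependent Fq ![(1 : F), v, lam] := by
      rw [Fintype.linearIndependent_iff]
      intro gc hsum
      rw [Fin.sum_univ_three] at hsum
      simp only [Matrix.cons_val_zero, Matrix.cons_val_one, Matrix.head_cons,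
        Matrix.cons_val_two, Matrix.tail_cons] at hsum
      rw [Algebra.smul_def, Algebra.smul_def, Algebra.smul_def, mul_one] at hsum
      have hg1 : gc 1 = 0 := by
        by_contra hg1
        have hE : e (gc 1) ≠ 0 := fun h0 => hg1 (e.injective (by rw [h0, map_zero]))
        have hveq : v = -(e (gc 0) + e (gc 2) * lam) / e (gc 1) := by
          rw [eq_div_iff hE]
          linear_combination hsum
        have hfixv : v ^ q ^ i₁ = v := by
          conv_lhs => rw [← hψ]
          rw [hveq, map_div₀, map_neg, map_add, map_mul, hψe, hψe, hψe, hψlam]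
        exact hv hfixv
      rw [hg1, map_zero, zero_mul, add_zero] at hsum
      have hg2 : gc 2 = 0 := by
        by_contra hg2
        have hE : e (gc 2) ≠ 0 := fun h0 => hg2 (e.injective (by rw [h0, map_zero]))
        have hlameq : e (-(gc 0) / gc 2) = lam := by
          rw [map_div₀, map_neg, div_eq_iff hE]
          linear_combination -hsum
        exact hlam_notrange _ hlameq
      rw [hg2, map_zero, zero_mul, add_zero] at hsum
      have hg0 : gc 0 = 0 := e.injective (by rw [hsum, map_zero])
      intro i
      fin_cases i <;> assumption
    refine contra ![(1 : F), v, lam] hind ?_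
    rw [← Matrix.exists_vecMul_eq_zero_iff]
    refine ⟨![lam, 0, -1], fun h0 => by simpa using congr_fun h0 2, ?_⟩
    funext c
    have hl : lam ^ q ^ ((![0, i₁, i₂] : Fin 3 → ℕ) c) = lam := by
      fin_cases c
      · simp
      · exact hlamfix i₁ h2i₁
      · exact hlamfix i₂ h2i₂
    simp [Matrix.vecMul, dotProduct, Fin.sum_univ_three, hl]
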